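/- Let X be a complex Banach space, U a bounded invertible operator on X, A a bounded invertible operator on X, and γ ∈ ℂ with |γ| = 1 which is not a root of unity, such that U A U⁻¹ = γ A. Let w be a bounded operator on X commuting with A and set T = w U. Then the spectrum σ(T), the semi-Fredholm spectrum σ₁(T), and the Fredholm spectrum σ₃(T) are rotation invariant subsets of ℂ: if λ belongs to one of these sets and μ ∈ ℂ with |μ| = 1, then μλ belongs to the same set. -/

import Mathlib

open Filter Topology

/-- A bounded operator is semi-Fredholm if its range is closed and either its kernel is
finite dimensional or its range has finite codimension. -/
def IsSemiFredholm {X : Type*} [NormedAddCommGroup X] [NormedSpace ℂ X]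
    (S : X →L[ℂ] X) : Prop :=
  IsClosed (LinearMap.range (S : X →ₗ[ℂ] X) : Set X) ∧
    (FiniteDimensional ℂ (LinearMap.ker (S : X →ₗ[ℂ] X)) ∨ FiniteDimensional ℂ (X ⧸ LinearMap.range (S : X →ₗ[ℂ] X)))

/-- A bounded operator is Fredholm if its range is closed, its kernel is finite dimensional,
and its range has finite codimension. -/
def IsFredholmOp {X : Type*} [NormedAddCommGroup X] [NormedSpace ℂ X]
    (S : X →L[ℂ] X) : Prop :=
  IsClosed (LinearMap.range (S : X →ₗ[ℂ] X) : Set X) ∧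
    FiniteDimensional ℂ (LinearMap.ker (S : X →ₗ[ℂ] X)) ∧ FiniteDimensional ℂ (X ⧸ LinearMap.range (S : X →ₗ[ℂ] X))

/-- The semi-Fredholm spectrum `σ₁(T)`. -/
def sigma1 {X : Type*} [NormedAddCommGroup X] [NormedSpace ℂ X]
    (T : X →L[ℂ] X) : Set ℂ :=
  {l : ℂ | ¬ IsSemiFredholm (l • (1 : X →L[ℂ] X) - T)}

/-- The Fredholm spectrum `σ₃(T)`. -/
def sigma3 {X : Type*} [NormedAddCommGroup X] [NormedSpace ℂ X]
    (T : X →L[ℂ] X) : Set ℂ :=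
  {l : ℂ | ¬ IsFredholmOp (l • (1 : X →L[ℂ] X) - T)}

/-- A subset of `ℂ` is rotation invariant if it is stable under multiplication by
unimodular numbers. -/
def RotationInvariant (s : Set ℂ) : Prop :=
  ∀ l ∈ s, ∀ μ : ℂ, ‖μ‖ = 1 → μ * l ∈ s

/-! ### Auxiliary lemmas: closedness of subspaces -/

section AuxClosed

variable {X : Type*} [NormedAddCommGroup X] [NormedSpace ℂ X]

lemma aux_isClosed_of_fd_map [CompleteSpace X] {M W : Submodule ℂ X} (hMW : M ≤ W)
    (hM : IsClosed (M : Set X)) (hfd : FiniteDimensional ℂ (W.map M.mkQ)) :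
    IsClosed (W : Set X) := by
  haveI : IsClosed (M : Set X) := hM
  have hcont : Continuous M.mkQ := continuous_quot_mk
  have hclosed : IsClosed ((W.map M.mkQ : Submodule ℂ (X ⧸ M)) : Set (X ⧸ M)) :=
    Submodule.closed_of_finiteDimensional _
  have hW : Submodule.comap M.mkQ (W.map M.mkQ) = W := by
    rw [Submodule.comap_map_mkQ, sup_eq_right.mpr hMW]
  have hset : (W : Set X) = M.mkQ ⁻¹' (W.map M.mkQ : Set (X ⧸ M)) := by
    rw [← Submodule.comap_coe, hW]
  rw [hset]
  exact hclosed.preimage hcont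

lemma aux_isClosed_sup [CompleteSpace X] {M F : Submodule ℂ X}
    (hM : IsClosed (M : Set X)) (hF : FiniteDimensional ℂ F) :
    IsClosed ((M ⊔ F : Submodule ℂ X) : Set X) := by
  refine aux_isClosed_of_fd_map le_sup_left hM ?_
  rw [Submodule.map_sup, Submodule.mkQ_map_self, bot_sup_eq]
  exact Module.Finite.map _ _

lemma aux_boundedBelow {E : Type*} [NormedAddCommGroup E] [NormedSpace ℂ E] [CompleteSpace E]
    [CompleteSpace X] (f : E →L[ℂ] X) (hinj : Function.Injective f)
    (hclo : IsClosed (Set.range f)) : ∃ c > 0, ∀ x, c * ‖x‖ ≤ ‖f x‖ := by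
  set g := f.codRestrict (LinearMap.range (f : E →ₗ[ℂ] X)) (fun x => LinearMap.mem_range_self (f : E →ₗ[ℂ] X) x) with hg
  have hb : Function.Bijective g := by
    constructor
    · intro a b hab
      exact hinj (congrArg Subtype.val hab)
    · rintro ⟨y, x, rfl⟩
      exact ⟨x, rfl⟩
  haveI : CompleteSpace (LinearMap.range (f : E →ₗ[ℂ] X)) := by
    rw [← ContinuousLinearMap.coe_coe, ← LinearMap.coe_range] at hclo
    exact hclo.completeSpace_coe
  set e := ContinuousLinearEquiv.ofBijective g
    (LinearMap.ker_eq_bot.mpr hb.1) (LinearMap.range_eq_top.mpr hb.2) with he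
  set C := ‖(e.symm : LinearMap.range (f : E →ₗ[ℂ] X) →L[ℂ] E)‖ + 1 with hC
  have hCpos : 0 < C := by positivity
  refine ⟨C⁻¹, by positivity, fun x => ?_⟩
  rw [inv_mul_le_iff₀ hCpos]
  have h1 : e.symm (e x) = x := e.symm_apply_apply x
  have h2 : ‖e.symm (e x)‖ ≤ ‖(e.symm : LinearMap.range (f : E →ₗ[ℂ] X) →L[ℂ] E)‖ * ‖e x‖ :=
    (e.symm : LinearMap.range (f : E →ₗ[ℂ] X) →L[ℂ] E).le_opNorm _
  rw [h1] at h2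
  have h3 : ‖e x‖ = ‖f x‖ := rfl
  rw [h3] at h2
  calc ‖x‖ ≤ ‖(e.symm : LinearMap.range (f : E →ₗ[ℂ] X) →L[ℂ] E)‖ * ‖f x‖ := h2
    _ ≤ C * ‖f x‖ := by
        have := norm_nonneg (f x)
        nlinarith [norm_nonneg (e.symm : LinearMap.range (f : E →ₗ[ℂ] X) →L[ℂ] E)]

end AuxClosed

/-! ### Stability of the (semi-)Fredholm property -/

section AuxStab

variable {X : Type*} [NormedAddCommGroup X] [NormedSpace ℂ X]

set_option maxHeartbeats 1000000 in
lemma aux_stab_ker [CompleteSpace X] {S : X →L[ℂ] X}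
    (hclo : IsClosed ((LinearMap.range (S : X →ₗ[ℂ] X) : Submodule ℂ X) : Set X))
    (hker : FiniteDimensional ℂ (LinearMap.ker (S : X →ₗ[ℂ] X))) :
    ∃ ε > 0, ∀ S' : X →L[ℂ] X, ‖S' - S‖ < ε →
      IsClosed ((LinearMap.range (S' : X →ₗ[ℂ] X) : Submodule ℂ X) : Set X) ∧
        FiniteDimensional ℂ (LinearMap.ker (S' : X →ₗ[ℂ] X)) := by
  classical
  set N : Submodule ℂ X := LinearMap.ker (S : X →ₗ[ℂ] X) with hN
  obtain ⟨M, hMclosed, hcompl⟩ :=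
    (Submodule.ClosedComplemented.of_finiteDimensional N).exists_isClosed_isCompl
  haveI : CompleteSpace M := hMclosed.completeSpace_coe
  haveI : FiniteDimensional ℂ (X ⧸ M) :=
    Module.Finite.equiv (Submodule.quotientEquivOfIsCompl M N hcompl.symm).symm
  set f : M →L[ℂ] X := S.comp M.subtypeL with hf
  have hfran : LinearMap.range (f : M →ₗ[ℂ] X) = Submodule.map (S : X →ₗ[ℂ] X) M := by
    ext y
    constructor
    · rintro ⟨x, rfl⟩; exact ⟨x, x.2, rfl⟩
    · rintro ⟨x, hx, rfl⟩; exact ⟨⟨x, hx⟩, rfl⟩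
  have hinf : N ⊓ M = ⊥ := hcompl.inf_eq_bot
  have hsup : N ⊔ M = ⊤ := hcompl.sup_eq_top
  have hmapN : Submodule.map (S : X →ₗ[ℂ] X) N = ⊥ := by
    ext y; simp only [Submodule.mem_map, Submodule.mem_bot, hN, LinearMap.mem_ker]
    constructor
    · rintro ⟨x, hx, rfl⟩; exact hx
    · rintro rfl; exact ⟨0, by simp, by simp⟩
  have hranS : Submodule.map (S : X →ₗ[ℂ] X) M = LinearMap.range (S : X →ₗ[ℂ] X) := by
    conv_rhs => rw [← Submodule.map_top (S : X →ₗ[ℂ] X), ← hsup, Submodule.map_sup, hmapN, bot_sup_eq]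
  have hfinj : Function.Injective f := by
    intro a b hab
    have hmem : (a : X) - b ∈ N ⊓ M := by
      refine ⟨?_, M.sub_mem a.2 b.2⟩
      have : S (a : X) = S (b : X) := hab
      simp only [hN, LinearMap.mem_ker, map_sub, ContinuousLinearMap.coe_coe]
      simp [this]
    rw [hinf, Submodule.mem_bot, sub_eq_zero] at hmem
    exact Subtype.ext hmem
  have hfclo : IsClosed (Set.range f) := by
    have : Set.range f = ((LinearMap.range (S : X →ₗ[ℂ] X) : Submodule ℂ X) : Set X) := by
      rw [← ContinuousLinearMap.coe_coe, ← LinearMap.coe_range, hfran, hranS]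
    rw [this]; exact hclo
  obtain ⟨c, hcpos, hc⟩ := aux_boundedBelow f hfinj hfclo
  refine ⟨c / 2, by positivity, fun S' hS' => ?_⟩
  have hbelow : ∀ x : M, c / 2 * ‖x‖ ≤ ‖S' (x : X)‖ := by
    intro x
    have h1 : ‖S (x : X) - S' (x : X)‖ ≤ ‖S' - S‖ * ‖x‖ := by
      have := (S' - S).le_opNorm (x : X)
      rw [ContinuousLinearMap.sub_apply] at this
      rw [← norm_neg]
      simpa [norm_sub_rev] using this
    have h2 : c * ‖x‖ ≤ ‖S (x : X)‖ := hc x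
    have h3 : ‖S (x : X)‖ - ‖S (x : X) - S' (x : X)‖ ≤ ‖S' (x : X)‖ := by
      have h4 := norm_sub_norm_le (S (x : X)) (S' (x : X))
      linarith [norm_sub_rev (S (x : X)) (S' (x : X)) ▸ h4]
    nlinarith [norm_nonneg x, hS'.le]
  set f' : M →L[ℂ] X := S'.comp M.subtypeL with hf'
  have hf'app : ∀ x : M, f' x = S' (x : X) := fun x => rfl
  have hanti : AntilipschitzWith ((c / 2)⁻¹.toNNReal) f' := by
    apply AddMonoidHomClass.antilipschitz_of_bound
    intro x
    rw [hf'app, Real.coe_toNNReal _ (by positivity)]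
    have h2 : c / 2 * ‖x‖ ≤ ‖S' (x : X)‖ := hbelow x
    have hpos : (0:ℝ) < c / 2 := by positivity
    calc ‖x‖ = (c / 2)⁻¹ * (c / 2 * ‖x‖) := (inv_mul_cancel_left₀ (ne_of_gt hpos) ‖x‖).symm
      _ ≤ (c / 2)⁻¹ * ‖S' (x : X)‖ := mul_le_mul_of_nonneg_left h2 (le_of_lt (inv_pos.mpr hpos))
  have hf'clo : IsClosed (Set.range f') := hanti.isClosed_range f'.uniformContinuous
  have hf'ran : LinearMap.range (f' : M →ₗ[ℂ] X) = Submodule.map (S' : X →ₗ[ℂ] X) M := by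
    ext y
    constructor
    · rintro ⟨x, rfl⟩; exact ⟨x, x.2, rfl⟩
    · rintro ⟨x, hx, rfl⟩; exact ⟨⟨x, hx⟩, rfl⟩
  constructor
  · have hsplit : LinearMap.range (S' : X →ₗ[ℂ] X) = Submodule.map (S' : X →ₗ[ℂ] X) M ⊔ Submodule.map (S' : X →ₗ[ℂ] X) N := by
      conv_lhs => rw [← Submodule.map_top (S' : X →ₗ[ℂ] X), ← hsup, Submodule.map_sup]
      rw [sup_comm]
    rw [hsplit]
    have h1 : IsClosed ((Submodule.map (S' : X →ₗ[ℂ] X) M : Submodule ℂ X) : Set X) := by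
      rw [← hf'ran, LinearMap.coe_range]; exact hf'clo
    exact aux_isClosed_sup h1 (Module.Finite.map N (S' : X →ₗ[ℂ] X))
  · set φ : LinearMap.ker (S' : X →ₗ[ℂ] X) →ₗ[ℂ] X ⧸ M := M.mkQ.comp (LinearMap.ker (S' : X →ₗ[ℂ] X)).subtype with hφ
    have hφinj : Function.Injective φ := by
      intro a b hab
      have hmem : (a : X) - b ∈ M := by
        rw [← Submodule.Quotient.mk_eq_zero M]
        have hq : M.mkQ (a : X) = M.mkQ (b : X) := hab
        simpa [map_sub, sub_eq_zero] using hq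
      set m : M := ⟨(a : X) - b, hmem⟩ with hm
      have hS'0 : S' ((m : M) : X) = 0 := by
        have ha : S' (a : X) = 0 := LinearMap.mem_ker.mp a.2
        have hb : S' (b : X) = 0 := LinearMap.mem_ker.mp b.2
        show S' ((a : X) - b) = 0
        rw [map_sub, ha, hb, sub_zero]
      have h := hbelow m
      rw [hS'0, norm_zero] at h
      have hz : ‖m‖ = 0 := le_antisymm (by nlinarith [norm_nonneg m]) (norm_nonneg _)
      have hm0 : m = 0 := norm_eq_zero.mp hz
      have : (a : X) - b = 0 := congrArg Subtype.val hm0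
      exact Subtype.ext (sub_eq_zero.mp this)
    exact FiniteDimensional.of_injective φ hφinj

lemma aux_surj_stab {E : Type*} [NormedAddCommGroup E] [NormedSpace ℂ E] [CompleteSpace E]
    [CompleteSpace X] (Φ : E →L[ℂ] X) (hsurj : Function.Surjective Φ) :
    ∃ ε > 0, ∀ Φ' : E →L[ℂ] X, ‖Φ' - Φ‖ < ε → Function.Surjective Φ' := by
  obtain ⟨C, hCpos, hC⟩ := Φ.exists_preimage_norm_le hsurj
  choose g hg1 hg2 using hC
  refine ⟨(2 * C)⁻¹, by positivity, fun Φ' hΦ' => ?_⟩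
  intro y₀
  set F : X → X := fun z => z - Φ' (g z) with hF
  have hkey : ∀ z, ‖F z‖ ≤ 1 / 2 * ‖z‖ := by
    intro z
    have h1 : F z = -((Φ' - Φ) (g z)) := by
      rw [hF]
      simp only [ContinuousLinearMap.sub_apply, neg_sub, hg1 z]
    rw [h1, norm_neg]
    calc ‖(Φ' - Φ) (g z)‖ ≤ ‖Φ' - Φ‖ * ‖g z‖ := (Φ' - Φ).le_opNorm _
      _ ≤ ‖Φ' - Φ‖ * (C * ‖z‖) := by
          have := hg2 z
          gcongr
      _ ≤ (2 * C)⁻¹ * (C * ‖z‖) := by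
          have := hΦ'.le
          gcongr
      _ = 1 / 2 * ‖z‖ := by field_simp
  set yseq : ℕ → X := fun n => F^[n] y₀ with hyseq
  have hyrec : ∀ n, yseq (n + 1) = F (yseq n) := by
    intro n; rw [hyseq]; simp [Function.iterate_succ_apply']
  have hy0 : yseq 0 = y₀ := rfl
  have hyn : ∀ n, ‖yseq n‖ ≤ (1 / 2) ^ n * ‖y₀‖ := by
    intro n
    induction n with
    | zero => simp [hy0]
    | succ n ih =>
        rw [hyrec n]
        calc ‖F (yseq n)‖ ≤ 1 / 2 * ‖yseq n‖ := hkey _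
          _ ≤ 1 / 2 * ((1 / 2) ^ n * ‖y₀‖) := by gcongr
          _ = (1 / 2) ^ (n + 1) * ‖y₀‖ := by ring
  set xseq : ℕ → E := fun n => g (yseq n) with hxseq
  have hΦx : ∀ n, Φ' (xseq n) = yseq n - yseq (n + 1) := by
    intro n
    rw [hyrec n, hF]
    simp [hxseq]
  have hxnorm : ∀ n, ‖xseq n‖ ≤ C * ‖y₀‖ * (1 / 2) ^ n := by
    intro n
    calc ‖xseq n‖ ≤ C * ‖yseq n‖ := hg2 _
      _ ≤ C * ((1 / 2) ^ n * ‖y₀‖) := by gcongr; exact hyn n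
      _ = C * ‖y₀‖ * (1 / 2) ^ n := by ring
  have hsumgeo : Summable (fun n : ℕ => C * ‖y₀‖ * (1 / 2) ^ n) :=
    (summable_geometric_of_lt_one (by norm_num) (by norm_num)).mul_left _
  have hsumx : Summable xseq := Summable.of_norm_bounded hsumgeo hxnorm
  set x := ∑' n, xseq n with hx
  refine ⟨x, ?_⟩
  have h1 : HasSum (fun n => Φ' (xseq n)) (Φ' x) := hsumx.hasSum.mapL Φ'
  have h2 : Filter.Tendsto (fun n => ∑ i ∈ Finset.range n, Φ' (xseq i)) atTop (𝓝 (Φ' x)) :=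
    h1.tendsto_sum_nat
  have hylim : Filter.Tendsto yseq atTop (𝓝 0) := by
    apply squeeze_zero_norm hyn
    have : Filter.Tendsto (fun n : ℕ => (1 / 2 : ℝ) ^ n) atTop (𝓝 0) :=
      tendsto_pow_atTop_nhds_zero_of_lt_one (by norm_num) (by norm_num)
    simpa using this.mul_const ‖y₀‖
  have h3 : (fun n => ∑ i ∈ Finset.range n, Φ' (xseq i)) = fun n => y₀ - yseq n := by
    funext n
    calc ∑ i ∈ Finset.range n, Φ' (xseq i) = ∑ i ∈ Finset.range n, (yseq i - yseq (i + 1)) := by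
          exact Finset.sum_congr rfl fun i _ => hΦx i
      _ = yseq 0 - yseq n := Finset.sum_range_sub' yseq n
      _ = y₀ - yseq n := by rw [hy0]
  rw [h3] at h2
  have h4 : Filter.Tendsto (fun n => y₀ - yseq n) atTop (𝓝 (y₀ - 0)) :=
    tendsto_const_nhds.sub hylim
  have := tendsto_nhds_unique h2 h4
  rw [this, sub_zero]

set_option synthInstance.maxHeartbeats 400000 in
lemma aux_stab_coker [CompleteSpace X] {S : X →L[ℂ] X}
    (hclo : IsClosed ((LinearMap.range (S : X →ₗ[ℂ] X) : Submodule ℂ X) : Set X))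
    (hcoker : FiniteDimensional ℂ (X ⧸ LinearMap.range (S : X →ₗ[ℂ] X))) :
    ∃ ε > 0, ∀ S' : X →L[ℂ] X, ‖S' - S‖ < ε →
      IsClosed ((LinearMap.range (S' : X →ₗ[ℂ] X) : Submodule ℂ X) : Set X) ∧
        FiniteDimensional ℂ (X ⧸ LinearMap.range (S' : X →ₗ[ℂ] X)) := by
  classical
  set R : Submodule ℂ X := LinearMap.range (S : X →ₗ[ℂ] X) with hR
  obtain ⟨F, hFclosed, hFcompl⟩ :=
    (Submodule.ClosedComplemented.of_quotient_finiteDimensional hclo).exists_isClosed_isCompl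
  haveI hFfd : FiniteDimensional ℂ F := by
    have hinj : Function.Injective (R.mkQ.comp F.subtype) := by
      intro a b hab
      have : (a : X) - b ∈ R := by
        rw [← Submodule.Quotient.mk_eq_zero R]
        have hq : R.mkQ (a : X) = R.mkQ (b : X) := hab
        simpa [map_sub, sub_eq_zero] using hq
      have h2 : (a : X) - b ∈ R ⊓ F := ⟨this, F.sub_mem a.2 b.2⟩
      rw [hFcompl.inf_eq_bot, Submodule.mem_bot, sub_eq_zero] at h2
      exact Subtype.ext h2
    exact FiniteDimensional.of_injective (R.mkQ.comp F.subtype) hinj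
  haveI : CompleteSpace F := FiniteDimensional.complete ℂ F
  set Φ : X × F →L[ℂ] X := S.coprod F.subtypeL with hΦ
  have hΦapp : ∀ p : X × F, Φ p = S p.1 + (p.2 : X) := fun p => rfl
  have hΦsurj : Function.Surjective Φ := by
    intro y
    have hy : y ∈ R ⊔ F := by rw [hFcompl.sup_eq_top]; trivial
    obtain ⟨r, hr, f, hf, rfl⟩ := Submodule.mem_sup.mp hy
    obtain ⟨x, rfl⟩ := hr
    exact ⟨(x, ⟨f, hf⟩), rfl⟩
  obtain ⟨ε, hεpos, hε⟩ := aux_surj_stab Φ hΦsurj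
  refine ⟨ε, hεpos, fun S' hS' => ?_⟩
  set Φ' : X × F →L[ℂ] X := S'.coprod F.subtypeL with hΦ'
  have hΦ'app : ∀ p : X × F, Φ' p = S' p.1 + (p.2 : X) := fun p => rfl
  have hΦ'surj : Function.Surjective Φ' := by
    apply hε
    have hdiff : ∀ p : X × F, ‖(Φ' - Φ) p‖ ≤ ‖S' - S‖ * ‖p‖ := by
      intro p
      have h1 : (Φ' - Φ) p = (S' - S) p.1 := by
        simp [hΦ, hΦ', ContinuousLinearMap.coprod_apply]
      rw [h1]
      calc ‖(S' - S) p.1‖ ≤ ‖S' - S‖ * ‖p.1‖ := (S' - S).le_opNorm _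
        _ ≤ ‖S' - S‖ * ‖p‖ := by
            have := norm_fst_le p
            gcongr
    have h2 : ‖Φ' - Φ‖ ≤ ‖S' - S‖ :=
      ContinuousLinearMap.opNorm_le_bound _ (norm_nonneg _) hdiff
    exact lt_of_le_of_lt h2 hS'
  set R' : Submodule ℂ X := LinearMap.range (S' : X →ₗ[ℂ] X) with hR'
  have hsup' : R' ⊔ F = ⊤ := by
    rw [eq_top_iff]
    intro y _
    obtain ⟨⟨x, f⟩, rfl⟩ := hΦ'surj y
    exact Submodule.mem_sup.mpr ⟨S' x, ⟨x, rfl⟩, f, f.2, rfl⟩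
  constructor
  · set M₀ : Submodule ℂ (X × F) := (⊤ : Submodule ℂ X).prod (⊥ : Submodule ℂ F) with hM₀
    have hM₀closed : IsClosed (M₀ : Set (X × F)) := by
      have : (M₀ : Set (X × F)) = (Set.univ : Set X) ×ˢ ({0} : Set F) := by
        ext p; simp [hM₀, Submodule.mem_prod]
      rw [this]
      exact isClosed_univ.prod isClosed_singleton
    haveI : FiniteDimensional ℂ ((X × F) ⧸ M₀) := by
      have hsurj2 : Function.Surjective (M₀.mkQ.comp (LinearMap.inr ℂ X F)) := by
        intro z
        obtain ⟨⟨x, f⟩, rfl⟩ := M₀.mkQ_surjective z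
        refine ⟨f, ?_⟩
        have : (0, f) - (x, f) ∈ M₀ := by simp [hM₀]
        simpa using (Submodule.Quotient.eq M₀).mpr this
      exact Module.Finite.of_surjective _ hsurj2
    set W : Submodule ℂ (X × F) := M₀ ⊔ LinearMap.ker (Φ' : (X × F) →ₗ[ℂ] X) with hW
    have hWclosed : IsClosed (W : Set (X × F)) :=
      aux_isClosed_of_fd_map le_sup_left hM₀closed
        (FiniteDimensional.finiteDimensional_submodule _)
    have himg : (R' : Set X) = Φ' '' (W : Set (X × F)) := by
      apply Set.Subset.antisymm
      · rintro y ⟨x, rfl⟩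
        refine ⟨(x, 0), Submodule.mem_sup_left (by simp [hM₀]), ?_⟩
        rw [hΦ'app]
        simp
      · rintro y ⟨p, hp, rfl⟩
        obtain ⟨m, hm, k, hk, rfl⟩ := Submodule.mem_sup.mp hp
        have hk0 : Φ' k = 0 := hk
        rw [map_add, hk0, add_zero]
        have : Φ' m = S' m.1 := by
          have hm2 : m.2 = 0 := by
            have := hm.2
            simpa using this
          show S' m.1 + (m.2 : X) = S' m.1
          rw [hm2]; simp
        rw [this]
        exact ⟨m.1, rfl⟩
    rw [himg]
    rw [← isOpen_compl_iff]
    have hcompl_eq : (Φ' '' (W : Set (X × F)))ᶜ = Φ' '' ((W : Set (X × F))ᶜ) := by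
      ext z
      obtain ⟨u, rfl⟩ := hΦ'surj z
      constructor
      · intro hz
        refine ⟨u, fun hu => hz ⟨u, hu, rfl⟩, rfl⟩
      · rintro ⟨v, hv, hvz⟩ ⟨w, hw, hwz⟩
        apply hv
        have hker : v - w ∈ LinearMap.ker (Φ' : (X × F) →ₗ[ℂ] X) := by
          rw [LinearMap.mem_ker, map_sub, ContinuousLinearMap.coe_coe, hvz, hwz, sub_self]
        have : v = w + (v - w) := by abel
        rw [this]
        exact W.add_mem hw (Submodule.mem_sup_right hker)
    rw [hcompl_eq]
    exact (Φ'.isOpenMap hΦ'surj) _ hWclosed.isOpen_compl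
  · have hsurj3 : Function.Surjective (R'.mkQ.comp F.subtype) := by
      intro z
      obtain ⟨x, rfl⟩ := R'.mkQ_surjective z
      have hx : x ∈ R' ⊔ F := by rw [hsup']; trivial
      obtain ⟨r, hr, f, hf, rfl⟩ := Submodule.mem_sup.mp hx
      refine ⟨⟨f, hf⟩, ?_⟩
      have : (f : X) - (r + f) ∈ R' := by simpa using R'.neg_mem hr
      simpa using (Submodule.Quotient.eq R').mpr this
    exact Module.Finite.of_surjective _ hsurj3

lemma aux_SF_stab [CompleteSpace X] {S : X →L[ℂ] X} (h : IsSemiFredholm S) :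
    ∃ ε > 0, ∀ S' : X →L[ℂ] X, ‖S' - S‖ < ε → IsSemiFredholm S' := by
  obtain ⟨hclo, hfin⟩ := h
  rcases hfin with hk | hc
  · obtain ⟨ε, hε, H⟩ := aux_stab_ker hclo hk
    exact ⟨ε, hε, fun S' h' => ⟨(H S' h').1, Or.inl (H S' h').2⟩⟩
  · obtain ⟨ε, hε, H⟩ := aux_stab_coker hclo hc
    exact ⟨ε, hε, fun S' h' => ⟨(H S' h').1, Or.inr (H S' h').2⟩⟩

lemma aux_F_stab [CompleteSpace X] {S : X →L[ℂ] X} (h : IsFredholmOp S) :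
    ∃ ε > 0, ∀ S' : X →L[ℂ] X, ‖S' - S‖ < ε → IsFredholmOp S' := by
  obtain ⟨hclo, hk, hc⟩ := h
  obtain ⟨ε₁, hε₁, H₁⟩ := aux_stab_ker hclo hk
  obtain ⟨ε₂, hε₂, H₂⟩ := aux_stab_coker hclo hc
  refine ⟨min ε₁ ε₂, lt_min hε₁ hε₂, fun S' h' => ?_⟩
  have h1 := H₁ S' (lt_of_lt_of_le h' (min_le_left _ _))
  have h2 := H₂ S' (lt_of_lt_of_le h' (min_le_right _ _))
  exact ⟨h1.1, h1.2, h2.2⟩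

lemma aux_sigma1_isClosed [CompleteSpace X] (T : X →L[ℂ] X) : IsClosed (sigma1 T) := by
  have heq : sigma1 T = {l : ℂ | IsSemiFredholm (l • (1 : X →L[ℂ] X) - T)}ᶜ := by
    ext l; simp [sigma1]
  rw [heq]
  apply IsOpen.isClosed_compl
  rw [Metric.isOpen_iff]
  intro l₀ hP
  obtain ⟨ε, hε, H⟩ := aux_SF_stab hP
  refine ⟨ε, hε, fun l hl => ?_⟩
  apply H
  have hdiff : l • (1 : X →L[ℂ] X) - T - (l₀ • (1 : X →L[ℂ] X) - T)
      = (l - l₀) • (1 : X →L[ℂ] X) := by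
    rw [sub_smul]; abel
  rw [hdiff]
  have hd : dist l l₀ < ε := Metric.mem_ball.mp hl
  rw [dist_eq_norm] at hd
  calc ‖(l - l₀) • (1 : X →L[ℂ] X)‖ ≤ ‖l - l₀‖ := by
        apply ContinuousLinearMap.opNorm_le_bound _ (norm_nonneg _)
        intro x
        have hx : ((l - l₀) • (1 : X →L[ℂ] X)) x = (l - l₀) • x := rfl
        rw [hx, norm_smul]
    _ < ε := hd

lemma aux_sigma3_isClosed [CompleteSpace X] (T : X →L[ℂ] X) : IsClosed (sigma3 T) := by
  have heq : sigma3 T = {l : ℂ | IsFredholmOp (l • (1 : X →L[ℂ] X) - T)}ᶜ := by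
    ext l; simp [sigma3]
  rw [heq]
  apply IsOpen.isClosed_compl
  rw [Metric.isOpen_iff]
  intro l₀ hP
  obtain ⟨ε, hε, H⟩ := aux_F_stab hP
  refine ⟨ε, hε, fun l hl => ?_⟩
  apply H
  have hdiff : l • (1 : X →L[ℂ] X) - T - (l₀ • (1 : X →L[ℂ] X) - T)
      = (l - l₀) • (1 : X →L[ℂ] X) := by
    rw [sub_smul]; abel
  rw [hdiff]
  have hd : dist l l₀ < ε := Metric.mem_ball.mp hl
  rw [dist_eq_norm] at hd
  calc ‖(l - l₀) • (1 : X →L[ℂ] X)‖ ≤ ‖l - l₀‖ := by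
        apply ContinuousLinearMap.opNorm_le_bound _ (norm_nonneg _)
        intro x
        have hx : ((l - l₀) • (1 : X →L[ℂ] X)) x = (l - l₀) • x := rfl
        rw [hx, norm_smul]
    _ < ε := hd

end AuxStab

/-! ### Conjugation and scalar invariance -/

section Conj

variable {X : Type*} [NormedAddCommGroup X] [NormedSpace ℂ X]
variable {A B S : X →L[ℂ] X}

lemma aux_conj_ker_ran (hAB : A * B = 1) (hBA : B * A = 1) (S : X →L[ℂ] X) :
    ∃ e : X ≃ₗ[ℂ] X, (⇑e = ⇑A) ∧
      LinearMap.ker ((A * S * B : X →L[ℂ] X) : X →ₗ[ℂ] X) = Submodule.map (e : X →ₗ[ℂ] X) (LinearMap.ker (S : X →ₗ[ℂ] X)) ∧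
      LinearMap.range ((A * S * B : X →L[ℂ] X) : X →ₗ[ℂ] X) = Submodule.map (e : X →ₗ[ℂ] X) (LinearMap.range (S : X →ₗ[ℂ] X)) := by
  have h1 : ∀ x, B (A x) = x := fun x => by
    have := congrArg (fun f : X →L[ℂ] X => f x) hBA
    simpa [ContinuousLinearMap.mul_apply] using this
  have h2 : ∀ x, A (B x) = x := fun x => by
    have := congrArg (fun f : X →L[ℂ] X => f x) hAB
    simpa [ContinuousLinearMap.mul_apply] using this
  refine ⟨LinearEquiv.ofLinear (A : X →ₗ[ℂ] X) (B : X →ₗ[ℂ] X)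
    (by ext x; simp [h2]) (by ext x; simp [h1]), rfl, ?_, ?_⟩
  · ext x
    simp only [LinearMap.mem_ker, Submodule.mem_map]
    have happ : (A * S * B) x = A (S (B x)) := rfl
    constructor
    · intro h
      rw [ContinuousLinearMap.coe_coe, happ] at h
      refine ⟨B x, ?_, ?_⟩
      · show S (B x) = 0
        have : B (A (S (B x))) = B 0 := by rw [h]
        simpa [h1] using this
      · show A (B x) = x
        exact h2 x
    · rintro ⟨y, hy, rfl⟩
      have hy' : S y = 0 := hy
      show A (S (B (A y))) = 0
      rw [h1 y, hy', map_zero]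
  · ext y
    simp only [LinearMap.mem_range, Submodule.mem_map]
    constructor
    · rintro ⟨x, rfl⟩
      refine ⟨S (B x), ⟨B x, rfl⟩, rfl⟩
    · rintro ⟨z, ⟨u, rfl⟩, rfl⟩
      refine ⟨A u, ?_⟩
      show A (S (B (A u))) = A (S u)
      rw [h1 u]

lemma aux_conj_SF (hAB : A * B = 1) (hBA : B * A = 1) (hS : IsSemiFredholm S) :
    IsSemiFredholm (A * S * B) := by
  obtain ⟨e, heA, hker, hran⟩ := aux_conj_ker_ran hAB hBA S
  obtain ⟨hclo, hfin⟩ := hS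
  have hcloA : IsClosed ((Submodule.map (e : X →ₗ[ℂ] X) (LinearMap.range (S : X →ₗ[ℂ] X)) :
      Submodule ℂ X) : Set X) := by
    have h1 : ((Submodule.map (e : X →ₗ[ℂ] X) (LinearMap.range (S : X →ₗ[ℂ] X)) : Submodule ℂ X) : Set X)
        = ⇑e '' ((LinearMap.range (S : X →ₗ[ℂ] X) : Submodule ℂ X) : Set X) := by
      rw [Submodule.map_coe, LinearEquiv.coe_coe]
    rw [h1, heA]
    have h3 : ∀ x, B (A x) = x := fun x => by
      have := congrArg (fun f : X →L[ℂ] X => f x) hBA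
      simpa [ContinuousLinearMap.mul_apply] using this
    have h4 : ∀ x, A (B x) = x := fun x => by
      have := congrArg (fun f : X →L[ℂ] X => f x) hAB
      simpa [ContinuousLinearMap.mul_apply] using this
    exact (ContinuousLinearEquiv.equivOfInverse A B h3 h4).toHomeomorph.isClosedMap _ hclo
  constructor
  · rw [hran]; exact hcloA
  · rcases hfin with hk | hc
    · left
      rw [hker]
      exact Module.Finite.equiv (e.submoduleMap (LinearMap.ker (S : X →ₗ[ℂ] X)))
    · right
      rw [hran]
      exact Module.Finite.equiv
        (Submodule.Quotient.equiv (LinearMap.range (S : X →ₗ[ℂ] X)) _ e rfl)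

lemma aux_conj_F (hAB : A * B = 1) (hBA : B * A = 1) (hS : IsFredholmOp S) :
    IsFredholmOp (A * S * B) := by
  obtain ⟨e, heA, hker, hran⟩ := aux_conj_ker_ran hAB hBA S
  obtain ⟨hclo, hk, hc⟩ := hS
  refine ⟨?_, ?_, ?_⟩
  · have h1 : ((Submodule.map (e : X →ₗ[ℂ] X) (LinearMap.range (S : X →ₗ[ℂ] X)) : Submodule ℂ X) : Set X)
        = ⇑e '' ((LinearMap.range (S : X →ₗ[ℂ] X) : Submodule ℂ X) : Set X) := by
      rw [Submodule.map_coe, LinearEquiv.coe_coe]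
    have h3 : ∀ x, B (A x) = x := fun x => by
      have := congrArg (fun f : X →L[ℂ] X => f x) hBA
      simpa [ContinuousLinearMap.mul_apply] using this
    have h4 : ∀ x, A (B x) = x := fun x => by
      have := congrArg (fun f : X →L[ℂ] X => f x) hAB
      simpa [ContinuousLinearMap.mul_apply] using this
    rw [hran]
    rw [show ((Submodule.map (e : X →ₗ[ℂ] X) (LinearMap.range (S : X →ₗ[ℂ] X)) : Submodule ℂ X) : Set X)
        = ⇑A '' ((LinearMap.range (S : X →ₗ[ℂ] X) : Submodule ℂ X) : Set X) from by rw [h1, heA]]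
    exact (ContinuousLinearEquiv.equivOfInverse A B h3 h4).toHomeomorph.isClosedMap _ hclo
  · rw [hker]
    exact Module.Finite.equiv (e.submoduleMap (LinearMap.ker (S : X →ₗ[ℂ] X)))
  · rw [hran]
    exact Module.Finite.equiv (Submodule.Quotient.equiv (LinearMap.range (S : X →ₗ[ℂ] X)) _ e rfl)

lemma aux_conj_SF_iff (hAB : A * B = 1) (hBA : B * A = 1) :
    IsSemiFredholm (A * S * B) ↔ IsSemiFredholm S := by
  constructor
  · intro h
    have := aux_conj_SF hBA hAB h
    have heq : B * (A * S * B) * A = S := by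
      have h2 : B * (A * S * B) * A = (B * A) * S * (B * A) := by
        noncomm_ring
      rw [h2, hBA, one_mul, mul_one]
    rwa [heq] at this
  · exact aux_conj_SF hAB hBA

lemma aux_conj_F_iff (hAB : A * B = 1) (hBA : B * A = 1) :
    IsFredholmOp (A * S * B) ↔ IsFredholmOp S := by
  constructor
  · intro h
    have := aux_conj_F hBA hAB h
    have heq : B * (A * S * B) * A = S := by
      have h2 : B * (A * S * B) * A = (B * A) * S * (B * A) := by
        noncomm_ring
      rw [h2, hBA, one_mul, mul_one]
    rwa [heq] at this
  · exact aux_conj_F hAB hBA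

lemma aux_smul_ker_ran {c : ℂ} (hc : c ≠ 0) (S : X →L[ℂ] X) :
    LinearMap.ker ((c • S : X →L[ℂ] X) : X →ₗ[ℂ] X) = LinearMap.ker (S : X →ₗ[ℂ] X) ∧
      LinearMap.range ((c • S : X →L[ℂ] X) : X →ₗ[ℂ] X) = LinearMap.range (S : X →ₗ[ℂ] X) := by
  constructor
  · ext x
    simp only [LinearMap.mem_ker]
    show c • S x = 0 ↔ _
    rw [smul_eq_zero]
    simp [hc]
  · ext y
    simp only [LinearMap.mem_range]
    constructor
    · rintro ⟨x, rfl⟩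
      exact ⟨c • x, by show S (c • x) = c • S x; rw [map_smul]⟩
    · rintro ⟨x, rfl⟩
      refine ⟨c⁻¹ • x, ?_⟩
      show c • S (c⁻¹ • x) = S x
      rw [map_smul, smul_smul, mul_inv_cancel₀ hc, one_smul]

lemma aux_smul_SF_iff {c : ℂ} (hc : c ≠ 0) {S : X →L[ℂ] X} :
    IsSemiFredholm (c • S) ↔ IsSemiFredholm S := by
  obtain ⟨hker, hran⟩ := aux_smul_ker_ran hc S
  unfold IsSemiFredholm
  rw [hker, hran]

lemma aux_smul_F_iff {c : ℂ} (hc : c ≠ 0) {S : X →L[ℂ] X} :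
    IsFredholmOp (c • S) ↔ IsFredholmOp S := by
  obtain ⟨hker, hran⟩ := aux_smul_ker_ran hc S
  unfold IsFredholmOp
  rw [hker, hran]

lemma aux_isUnit_conj {R : Type*} [Monoid R] {u v S : R} (hu : IsUnit u) (hv : IsUnit v) :
    IsUnit (u * S * v) ↔ IsUnit S := by
  obtain ⟨u', rfl⟩ := hu
  obtain ⟨v', rfl⟩ := hv
  constructor
  · intro h
    have heq : S = ↑u'⁻¹ * ((u' : R) * S * v') * ↑v'⁻¹ := by
      rw [mul_assoc ((↑u'⁻¹ : R)), mul_assoc ((u' : R) * S), Units.mul_inv, mul_one,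
        ← mul_assoc, Units.inv_mul, one_mul]
    rw [heq]
    exact (u'⁻¹.isUnit.mul h).mul v'⁻¹.isUnit
  · intro h
    exact ((u'.isUnit.mul h)).mul v'.isUnit

end Conj

/-! ### Density of powers of a non-root-of-unity on the circle -/

lemma aux_dense_powers {γ : ℂ} (hγ : ‖γ‖ = 1) (hroot : ∀ n : ℕ, 1 ≤ n → γ ^ n ≠ 1)
    {μ : ℂ} (hμ : ‖μ‖ = 1) : μ ∈ closure {z : ℂ | ∃ n : ℤ, γ ^ n = z} := by
  have hγ0 : γ ≠ 0 := by
    intro h; rw [h, norm_zero] at hγ; norm_num at hγ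
  have hμ0 : μ ≠ 0 := by
    intro h; rw [h, norm_zero] at hμ; norm_num at hμ
  have habs : ‖γ‖ = 1 := hγ
  have habsμ : ‖μ‖ = 1 := hμ
  set θ : ℝ := Complex.arg γ with hθ
  have hexp : Complex.exp (θ * Complex.I) = γ := by
    have := Complex.exp_log hγ0
    rwa [Complex.log, habs, Real.log_one, Complex.ofReal_zero, zero_add] at this
  set σ : ℝ := Complex.arg μ with hσ
  have hexpμ : Complex.exp (σ * Complex.I) = μ := by
    have := Complex.exp_log hμ0
    rwa [Complex.log, habsμ, Real.log_one, Complex.ofReal_zero, zero_add] at this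
  set φ : ℝ → ℂ := fun t => Complex.exp (t * Complex.I) with hφ
  have hφcont : Continuous φ :=
    Complex.continuous_exp.comp (Complex.continuous_ofReal.mul continuous_const)
  set H : AddSubgroup ℝ := AddSubgroup.zmultiples θ ⊔ AddSubgroup.zmultiples (2 * Real.pi)
    with hH
  have hφH : φ '' (H : Set ℝ) ⊆ {z : ℂ | ∃ n : ℤ, γ ^ n = z} := by
    rintro - ⟨t, ht, rfl⟩
    rw [SetLike.mem_coe, hH, AddSubgroup.mem_sup] at ht
    obtain ⟨a, ha, b, hb, rfl⟩ := ht
    obtain ⟨m, rfl⟩ := AddSubgroup.mem_zmultiples_iff.mp ha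
    obtain ⟨k, rfl⟩ := AddSubgroup.mem_zmultiples_iff.mp hb
    refine ⟨m, ?_⟩
    rw [hφ]
    have h1 : ((↑(m • θ + k • (2 * Real.pi)) : ℂ)) * Complex.I
        = (m : ℂ) * (θ * Complex.I) + (k : ℂ) * (2 * Real.pi * Complex.I) := by
      push_cast [zsmul_eq_mul]
      ring
    simp only [h1, Complex.exp_add]
    rw [Complex.exp_int_mul, Complex.exp_int_mul, hexp]
    have h2 : Complex.exp (2 * Real.pi * Complex.I) = 1 := by
      exact_mod_cast Complex.exp_two_pi_mul_I
    rw [h2, one_zpow, mul_one]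
  rcases AddSubgroup.dense_or_cyclic H with hdense | ⟨a, ha⟩
  · have hσmem : σ ∈ closure (H : Set ℝ) := hdense σ
    have h3 : μ ∈ φ '' closure (H : Set ℝ) := ⟨σ, hσmem, hexpμ⟩
    have h4 : φ '' closure (H : Set ℝ) ⊆ closure (φ '' (H : Set ℝ)) :=
      image_closure_subset_closure_image hφcont
    exact closure_mono hφH (h4 h3)
  · exfalso
    have hθH : θ ∈ H := by
      apply AddSubgroup.mem_sup_left
      exact AddSubgroup.mem_zmultiples θ
    have h2πH : (2 * Real.pi) ∈ H := by
      apply AddSubgroup.mem_sup_right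
      exact AddSubgroup.mem_zmultiples _
    rw [ha, AddSubgroup.mem_closure_singleton] at hθH h2πH
    obtain ⟨m, hm⟩ := hθH
    obtain ⟨k, hk⟩ := h2πH
    have hk0 : k ≠ 0 := by
      intro h
      rw [h, zero_smul] at hk
      have := Real.pi_pos
      nlinarith
    have hkey : γ ^ k = 1 := by
      have h5 : (k : ℝ) * θ = (m : ℝ) * (2 * Real.pi) := by
        rw [← hm, ← hk]
        push_cast [zsmul_eq_mul]
        ring
      calc γ ^ k = Complex.exp (θ * Complex.I) ^ k := by rw [hexp]
        _ = Complex.exp ((k : ℂ) * (θ * Complex.I)) := (Complex.exp_int_mul _ k).symm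
        _ = Complex.exp ((m : ℂ) * (2 * Real.pi * Complex.I)) := by
            congr 1
            have h6 : ((k : ℂ) * θ : ℂ) = ((m : ℂ) * (2 * Real.pi) : ℂ) := by
              exact_mod_cast congrArg (fun x : ℝ => (x : ℂ)) h5
            calc (k : ℂ) * (θ * Complex.I) = ((k : ℂ) * θ) * Complex.I := by ring
              _ = ((m : ℂ) * (2 * Real.pi)) * Complex.I := by rw [h6]
              _ = (m : ℂ) * (2 * Real.pi * Complex.I) := by ring
        _ = (Complex.exp (2 * Real.pi * Complex.I)) ^ m := Complex.exp_int_mul _ m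
        _ = 1 := by
            have h2 : Complex.exp (2 * Real.pi * Complex.I) = 1 := by
              exact_mod_cast Complex.exp_two_pi_mul_I
            rw [h2, one_zpow]
    have hnat : γ ^ (k.natAbs) = 1 := by
      rcases Int.natAbs_eq k with h | h
      · rw [h] at hkey
        exact_mod_cast (zpow_natCast γ k.natAbs ▸ hkey)
      · rw [h, zpow_neg, zpow_natCast, inv_eq_one] at hkey
        exact hkey
    exact hroot k.natAbs (Nat.one_le_iff_ne_zero.mpr (Int.natAbs_ne_zero.mpr hk0)) hnat

lemma aux_rot {s : Set ℂ} (hsclosed : IsClosed s) {γ : ℂ} (hγ : ‖γ‖ = 1)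
    (hroot : ∀ n : ℕ, 1 ≤ n → γ ^ n ≠ 1) (hiff : ∀ l : ℂ, l ∈ s ↔ γ * l ∈ s) :
    RotationInvariant s := by
  have hγ0 : γ ≠ 0 := by
    intro h; rw [h, norm_zero] at hγ; norm_num at hγ
  intro l hl μ hμ
  have hz : ∀ n : ℤ, γ ^ n * l ∈ s := by
    intro n
    induction n using Int.induction_on with
    | zero => simpa using hl
    | succ n ih =>
        have h1 := (hiff _).mp ih
        have h2 : γ ^ ((n : ℤ) + 1) = γ * γ ^ (n : ℤ) := by
          rw [zpow_add_one₀ hγ0]; ring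
        rw [h2, mul_assoc]
        exact h1
    | pred n ih =>
        apply (hiff _).mpr
        have h2 : γ * γ ^ (-(n : ℤ) - 1) = γ ^ (-(n : ℤ)) := by
          rw [mul_comm, ← zpow_add_one₀ hγ0]
          norm_num
        rw [← mul_assoc, h2]
        exact ih
  have hdense := aux_dense_powers hγ hroot hμ
  have hcont : Continuous (fun z : ℂ => z * l) := continuous_id.mul continuous_const
  have himg : (fun z : ℂ => z * l) '' {z : ℂ | ∃ n : ℤ, γ ^ n = z} ⊆ s := by
    rintro - ⟨z, ⟨n, rfl⟩, rfl⟩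
    exact hz n
  have h5 : μ * l ∈ closure ((fun z : ℂ => z * l) '' {z : ℂ | ∃ n : ℤ, γ ^ n = z}) :=
    image_closure_subset_closure_image hcont ⟨μ, hdense, rfl⟩
  exact hsclosed.closure_subset_iff.mpr himg h5

theorem statement_3 {X : Type*} [NormedAddCommGroup X] [NormedSpace ℂ X] [CompleteSpace X]
    (U V A B w T : X →L[ℂ] X) (γ : ℂ)
    (hUV : U * V = 1) (hVU : V * U = 1) (hγ : ‖γ‖ = 1)
    (hroot : ∀ n : ℕ, 1 ≤ n → γ ^ n ≠ 1)
    (hAB : A * B = 1) (hBA : B * A = 1)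
    (hA : U * A * V = γ • A)
    (hwA : w * A = A * w)
    (hT : T = w * U) :
    RotationInvariant (spectrum ℂ T) ∧ RotationInvariant (sigma1 T) ∧
      RotationInvariant (sigma3 T) := by
  have hγ0 : γ ≠ 0 := by
    intro h; rw [h, norm_zero] at hγ; norm_num at hγ
  -- the key operator identities
  have hUA : U * A = γ • (A * U) := by
    calc U * A = U * A * (V * U) := by rw [hVU, mul_one]
      _ = (U * A * V) * U := by noncomm_ring
      _ = (γ • A) * U := by rw [hA]
      _ = γ • (A * U) := by rw [smul_mul_assoc]
  have hAU : A * U = γ⁻¹ • (U * A) := by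
    rw [hUA, smul_smul, inv_mul_cancel₀ hγ0, one_smul]
  have hATB : A * T * B = γ⁻¹ • T := by
    calc A * T * B = A * (w * U) * B := by rw [hT]
      _ = (A * w) * U * B := by noncomm_ring
      _ = (w * A) * U * B := by rw [← hwA]
      _ = w * (A * U) * B := by noncomm_ring
      _ = w * (γ⁻¹ • (U * A)) * B := by rw [hAU]
      _ = γ⁻¹ • (w * (U * A) * B) := by rw [mul_smul_comm, smul_mul_assoc]
      _ = γ⁻¹ • (w * U * (A * B)) := by noncomm_ring
      _ = γ⁻¹ • (w * U) := by rw [hAB, mul_one]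
      _ = γ⁻¹ • T := by rw [hT]
  have hkey : ∀ l : ℂ, (γ * l) • (1 : X →L[ℂ] X) - T
      = γ • (A * (l • (1 : X →L[ℂ] X) - T) * B) := by
    intro l
    have h1 : A * (l • (1 : X →L[ℂ] X) - T) * B = l • (A * B) - A * T * B := by
      rw [mul_sub, sub_mul]
      congr 1
      rw [mul_smul_comm, smul_mul_assoc, mul_one]
    rw [h1, hAB, hATB, smul_sub, smul_smul, smul_smul, mul_inv_cancel₀ hγ0, one_smul]
  -- spectrum
  have hiffspec : ∀ l : ℂ, l ∈ spectrum ℂ T ↔ γ * l ∈ spectrum ℂ T := by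
    intro l
    rw [spectrum.mem_iff, spectrum.mem_iff, Algebra.algebraMap_eq_smul_one,
      Algebra.algebraMap_eq_smul_one, hkey l]
    have hsmul : γ • (A * (l • (1 : X →L[ℂ] X) - T) * B)
        = (γ • A) * (l • (1 : X →L[ℂ] X) - T) * B := by
      rw [smul_mul_assoc, smul_mul_assoc]
    rw [hsmul]
    have huA : IsUnit (γ • A) := by
      refine ⟨⟨γ • A, γ⁻¹ • B, ?_, ?_⟩, rfl⟩
      · rw [smul_mul_smul_comm, hAB, mul_inv_cancel₀ hγ0, one_smul]
      · rw [smul_mul_smul_comm, hBA, inv_mul_cancel₀ hγ0, one_smul]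
    have huB : IsUnit B := ⟨⟨B, A, hBA, hAB⟩, rfl⟩
    rw [aux_isUnit_conj huA huB]
  have hiff1 : ∀ l : ℂ, l ∈ sigma1 T ↔ γ * l ∈ sigma1 T := by
    intro l
    have h1 : IsSemiFredholm ((γ * l) • (1 : X →L[ℂ] X) - T)
        ↔ IsSemiFredholm (l • (1 : X →L[ℂ] X) - T) := by
      rw [hkey l, aux_smul_SF_iff hγ0]
      exact aux_conj_SF_iff hAB hBA
    simp only [sigma1, Set.mem_setOf_eq]
    rw [h1]
  have hiff3 : ∀ l : ℂ, l ∈ sigma3 T ↔ γ * l ∈ sigma3 T := by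
    intro l
    have h1 : IsFredholmOp ((γ * l) • (1 : X →L[ℂ] X) - T)
        ↔ IsFredholmOp (l • (1 : X →L[ℂ] X) - T) := by
      rw [hkey l, aux_smul_F_iff hγ0]
      exact aux_conj_F_iff hAB hBA
    simp only [sigma3, Set.mem_setOf_eq]
    rw [h1]
  exact ⟨aux_rot (spectrum.isClosed T) hγ hroot hiffspec,
    aux_rot (aux_sigma1_isClosed T) hγ hroot hiff1,
    aux_rot (aux_sigma3_isClosed T) hγ hroot hiff3⟩
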